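/- Let the observed data be any (X_i, Y_i)_{i=1}^n ⊂ ℝ^p × {0,1} and let the synthetic data-generating distribution (X*, Y*) satisfy Condition 1 with constants B₁ and q. Assume Condition 5: τ ≥ c_*·p for some constant c_* > 0; assume also p > ω_*·n for some constant ω_* > 0, and set C_* := 1 + 1/(c_*ω_*), so that (n + τ)/τ ≤ C_*. Then there exist positive constants η₀, ν depending only on B₁ and q such that every maximizer β̂_∞ of the population-catalytic-prior objective satisfies ‖β̂_∞‖₂ ≤ C_* log(2) / (η₀ν). -/

import Mathlib

open MeasureTheory ProbabilityTheory
open scoped RealInnerProductSpace BigOperators ENNReal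

/-- The logistic log-partition function `ρ(t) = log(1 + eᵗ)`. -/
noncomputable def rho (t : ℝ) : ℝ := Real.log (1 + Real.exp t)

/-- The logistic (sigmoid) function `ρ'(t) = eᵗ/(1 + eᵗ)`. -/
noncomputable def rho' (t : ℝ) : ℝ := Real.exp t / (1 + Real.exp t)

/-- `ρ''(t) = ρ'(t)(1 − ρ'(t))`. -/
noncomputable def rho'' (t : ℝ) : ℝ := rho' t * (1 - rho' t)

/-- **Condition 1** of the paper, on the synthetic data-generating distribution of a
pair `(X*, Y*)`: the first coordinate of `X*` is `1`; the remaining coordinates are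
independent, centered, of unit variance, and bounded by `B₁`; `Y*` is `{0,1}`-valued
and `q ≤ P(Y* = 1 ∣ X*) ≤ 1 − q` (expressed via the conditional expectation of the
indicator of `{Y* = 1}` given `σ(X*)`). -/
def Condition1 {Ω : Type*} [MeasurableSpace Ω] (μ : Measure Ω) {p : ℕ}
    (Xstar : Ω → EuclideanSpace ℝ (Fin p)) (Ystar : Ω → ℝ) (B₁ q : ℝ) : Prop :=
  (∀ j : Fin p, (j : ℕ) = 0 → ∀ᵐ ω ∂μ, Xstar ω j = 1) ∧
  (∀ j : Fin p, (j : ℕ) ≠ 0 →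
    (∫ ω, Xstar ω j ∂μ) = 0 ∧ variance (fun ω => Xstar ω j) μ = 1 ∧
      (∀ᵐ ω ∂μ, |Xstar ω j| ≤ B₁)) ∧
  iIndepFun
    (fun (j : {j : Fin p // (j : ℕ) ≠ 0}) ω => Xstar ω j.1) μ ∧
  (∀ᵐ ω ∂μ, Ystar ω = 0 ∨ Ystar ω = 1) ∧
  (∀ᵐ ω ∂μ,
    q ≤ (μ[(fun ω' => if Ystar ω' = 1 then (1 : ℝ) else 0) |
          MeasurableSpace.comap Xstar inferInstance]) ω ∧
    (μ[(fun ω' => if Ystar ω' = 1 then (1 : ℝ) else 0) |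
          MeasurableSpace.comap Xstar inferInstance]) ω ≤ 1 - q)

universe u

/-- The population catalytic-prior objective (to be maximized). -/
noncomputable def popObj {Ω : Type*} [MeasurableSpace Ω] (μ : Measure Ω) {n p : ℕ}
    (τ : ℝ) (X : Fin n → EuclideanSpace ℝ (Fin p)) (Y : Fin n → ℝ)
    (Xstar : Ω → EuclideanSpace ℝ (Fin p)) (Ystar : Ω → ℝ)
    (β : EuclideanSpace ℝ (Fin p)) : ℝ :=
  (∑ i, (Y i * ⟪X i, β⟫ - rho ⟪X i, β⟫)) +
    τ * ∫ ω, (Ystar ω * ⟪Xstar ω, β⟫ - rho ⟪Xstar ω, β⟫) ∂μ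

/-! ### Auxiliary lemmas -/

theorem rho_nonneg (t : ℝ) : 0 ≤ rho t :=
  Real.log_nonneg (by linarith [Real.exp_pos t])

theorem le_rho (t : ℝ) : t ≤ rho t := by
  have h := Real.log_le_log (Real.exp_pos t)
    (by linarith [Real.exp_pos t] : Real.exp t ≤ 1 + Real.exp t)
  simpa [Real.log_exp, rho] using h

theorem rho_zero : rho 0 = Real.log 2 := by norm_num [rho]

theorem rho_mono : Monotone rho := fun a b hab =>
  Real.log_le_log (by linarith [Real.exp_pos a]) (by linarith [Real.exp_le_exp.2 hab])

theorem obj_term_nonpos {y t : ℝ} (hy : y = 0 ∨ y = 1) : y * t - rho t ≤ 0 := by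
  rcases hy with h | h <;> subst h <;> simp [rho_nonneg, le_rho]

theorem key_pointwise {w t q : ℝ} (hw1 : q ≤ w) (hw2 : w ≤ 1 - q) : q * |t| ≤ rho t - w * t := by
  rcases le_or_gt 0 t with h | h
  · rw [abs_of_nonneg h]
    nlinarith [le_rho t]
  · rw [abs_of_neg h]
    nlinarith [rho_nonneg t]

section Aux

variable {Ω : Type*} [MeasurableSpace Ω] {μ : Measure Ω}

theorem integrable_of_ae_bdd [IsFiniteMeasure μ] {f : Ω → ℝ} (hm : AEStronglyMeasurable f μ)
    {C : ℝ} (h : ∀ᵐ ω ∂μ, |f ω| ≤ C) : Integrable f μ :=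
  (integrable_const C).mono' hm (by simpa [Real.norm_eq_abs] using h)

theorem my_cs [IsFiniteMeasure μ] {u v : Ω → ℝ} (hu : Integrable (fun ω => u ω * u ω) μ)
    (hv : Integrable (fun ω => v ω * v ω) μ) (huv : Integrable (fun ω => u ω * v ω) μ) :
    (∫ ω, u ω * v ω ∂μ)^2 ≤ (∫ ω, u ω * u ω ∂μ) * (∫ ω, v ω * v ω ∂μ) := by
  have h : ∀ x : ℝ, 0 ≤ (∫ ω, u ω * u ω ∂μ) * (x*x) + (2 * ∫ ω, u ω * v ω ∂μ) * x
      + (∫ ω, v ω * v ω ∂μ) := by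
    intro x
    have hA : Integrable (fun ω => x^2*(u ω*u ω) + (2*x)*(u ω*v ω)) μ :=
      (hu.const_mul _).add (huv.const_mul _)
    have hB : Integrable (fun ω => x^2*(u ω*u ω)) μ := hu.const_mul _
    have hC : Integrable (fun ω => (2*x)*(u ω*v ω)) μ := huv.const_mul _
    have e : (fun ω => (x * u ω + v ω)^2)
        = fun ω => (x^2 * (u ω * u ω) + (2*x) * (u ω * v ω)) + v ω * v ω := by
      funext ω; ring
    have h0 : 0 ≤ ∫ ω, (x * u ω + v ω)^2 ∂μ := integral_nonneg fun ω => sq_nonneg _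
    rw [e, integral_add hA hv, integral_add hB hC, integral_const_mul, integral_const_mul] at h0
    nlinarith [h0]
  have hd := discrim_le_zero h
  rw [discrim] at hd
  nlinarith [hd]

theorem condexp_pull [m0 : MeasurableSpace Ω] {μ : Measure Ω} [IsProbabilityMeasure μ]
    {E : Type*} [MeasurableSpace E] (Xs : Ω → E) (hX : Measurable Xs)
    (t g : Ω → ℝ) (ht : StronglyMeasurable[MeasurableSpace.comap Xs inferInstance] t)
    (htg : Integrable (t * g) μ) (hg : Integrable g μ) :
    ∫ ω, t ω * g ω ∂μ = ∫ ω, t ω * (μ[g | MeasurableSpace.comap Xs inferInstance]) ω ∂μ := by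
  set m := MeasurableSpace.comap Xs inferInstance
  have hm : m ≤ m0 := hX.comap_le
  haveI : SigmaFinite (μ.trim hm) := by infer_instance
  have h1 := condExp_mul_of_stronglyMeasurable_left ht htg hg
  have h2 : ∫ ω, (t * g) ω ∂μ = ∫ ω, (μ[t * g | m]) ω ∂μ := (integral_condExp hm).symm
  calc ∫ ω, t ω * g ω ∂μ = ∫ ω, (μ[t * g | m]) ω ∂μ := h2
    _ = ∫ ω, t ω * (μ[g|m]) ω ∂μ :=
        integral_congr_ae (by filter_upwards [h1] with ω h; simp [h])

theorem moments {ι : Type*} [DecidableEq ι] [IsProbabilityMeasure μ] (T : ι → Ω → ℝ)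
    (hind : iIndepFun T μ) (hmeas : ∀ j, Measurable (T j))
    (D : ι → ℝ) (hbd : ∀ j, ∀ᵐ ω ∂μ, |T j ω| ≤ D j) (hmean : ∀ j, ∫ ω, T j ω ∂μ = 0)
    (A : Finset ι) :
    (∀ᵐ ω ∂μ, |∑ j ∈ A, T j ω| ≤ ∑ j ∈ A, D j) ∧
    (∫ ω, (∑ j ∈ A, T j ω) ∂μ = 0) ∧
    (∫ ω, (∑ j ∈ A, T j ω)^2 ∂μ = ∑ j ∈ A, ∫ ω, (T j ω)^2 ∂μ) ∧
    (∫ ω, (∑ j ∈ A, T j ω)^4 ∂μ ≤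
      (∑ j ∈ A, ∫ ω, (T j ω)^4 ∂μ) + 3 * (∑ j ∈ A, ∫ ω, (T j ω)^2 ∂μ)^2) := by
  classical
  induction A using Finset.induction_on with
  | empty => simp
  | @insert a s ha IH =>
    obtain ⟨ihbd, ihmean, ih2, ih4⟩ := IH
    set S : Ω → ℝ := fun ω => ∑ j ∈ s, T j ω with hS
    set Ds : ℝ := ∑ j ∈ s, D j with hDs
    have hDs0 : 0 ≤ Ds := by
      obtain ⟨ω, hω⟩ := ihbd.exists
      exact le_trans (abs_nonneg _) hω
    have hDa0 : 0 ≤ D a := by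
      obtain ⟨ω, hω⟩ := (hbd a).exists
      exact le_trans (abs_nonneg _) hω
    have hSmeas : Measurable S := by
      apply Finset.measurable_sum
      exact fun j _ => hmeas j
    have hIF : IndepFun S (T a) μ := by
      have h1 : IndepFun (∑ j ∈ s, T j) (T a) μ := hind.indepFun_finsetSum_of_notMem hmeas ha
      have : (∑ j ∈ s, T j) = S := by funext ω; simp [hS]
      rwa [this] at h1
    have key : ∀ k l : ℕ, ∫ ω, (S ω)^k * (T a ω)^l ∂μ
        = (∫ ω, (S ω)^k ∂μ) * (∫ ω, (T a ω)^l ∂μ) := by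
      intro k l
      exact (hIF.comp (measurable_id.pow_const k) (measurable_id.pow_const l)).integral_mul_eq_mul_integral
        ((hSmeas.pow_const k).aestronglyMeasurable) (((hmeas a).pow_const l).aestronglyMeasurable)
    have hint : ∀ k l : ℕ, Integrable (fun ω => (S ω)^k * (T a ω)^l) μ := by
      intro k l
      apply integrable_of_ae_bdd
        (((hSmeas.pow_const k).mul ((hmeas a).pow_const l)).aestronglyMeasurable)
        (C := Ds^k * D a^l)
      filter_upwards [ihbd, hbd a] with ω h1 h2
      rw [Pi.mul_apply, abs_mul, abs_pow, abs_pow]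
      exact mul_le_mul (pow_le_pow_left₀ (abs_nonneg _) h1 k) (pow_le_pow_left₀ (abs_nonneg _) h2 l)
        (pow_nonneg (abs_nonneg _) l) (pow_nonneg hDs0 k)
    have hintS : ∀ k : ℕ, Integrable (fun ω => (S ω)^k) μ := by
      intro k; simpa using hint k 0
    have hintT : ∀ l : ℕ, Integrable (fun ω => (T a ω)^l) μ := by
      intro l; simpa using hint 0 l
    have hTa2 : 0 ≤ ∫ ω, (T a ω)^2 ∂μ := integral_nonneg fun ω => sq_nonneg _
    have hs2 : 0 ≤ ∑ j ∈ s, ∫ ω, (T j ω)^2 ∂μ := by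
      rw [← ih2]; exact integral_nonneg fun ω => sq_nonneg _
    have hTmean : ∫ ω, T a ω ∂μ = 0 := hmean a
    have ihmean' : ∫ ω, S ω ∂μ = 0 := ihmean
    have ih2' : ∫ ω, (S ω)^2 ∂μ = ∑ j ∈ s, ∫ ω, (T j ω)^2 ∂μ := ih2
    have I21 : Integrable (fun ω => (S ω)^2 + 2 * ((S ω)^1 * (T a ω)^1)) μ :=
      (hintS 2).add ((hint 1 1).const_mul 2)
    have I41 : Integrable (fun ω => (S ω)^4 + 4 * ((S ω)^3 * (T a ω)^1)) μ :=
      (hintS 4).add ((hint 3 1).const_mul 4)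
    have I42 : Integrable
        (fun ω => ((S ω)^4 + 4 * ((S ω)^3 * (T a ω)^1)) + 6 * ((S ω)^2 * (T a ω)^2)) μ :=
      I41.add ((hint 2 2).const_mul 6)
    have I43 : Integrable (fun ω => (((S ω)^4 + 4 * ((S ω)^3 * (T a ω)^1))
        + 6 * ((S ω)^2 * (T a ω)^2)) + 4 * ((S ω)^1 * (T a ω)^3)) μ :=
      I42.add ((hint 1 3).const_mul 4)
    constructor
    · filter_upwards [ihbd, hbd a] with ω h1 h2
      rw [Finset.sum_insert ha, Finset.sum_insert ha]
      calc |T a ω + S ω| ≤ |T a ω| + |S ω| := abs_add_le _ _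
        _ ≤ D a + Ds := add_le_add h2 h1
    constructor
    · have e : (fun ω => ∑ j ∈ insert a s, T j ω) = fun ω => T a ω + S ω := by
        funext ω; rw [Finset.sum_insert ha]
      rw [e, integral_add (by simpa using hintT 1) (by simpa using hintS 1)]
      simp [hTmean, ihmean']
    constructor
    · have e : (fun ω => (∑ j ∈ insert a s, T j ω)^2)
          = fun ω => ((S ω)^2 + 2 * ((S ω)^1 * (T a ω)^1)) + (T a ω)^2 := by
        funext ω; rw [Finset.sum_insert ha]; ring
      rw [e, integral_add I21 (hintT 2),
        integral_add (hintS 2) ((hint 1 1).const_mul 2), integral_const_mul, key 1 1]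
      simp only [pow_one]
      rw [Finset.sum_insert ha, ihmean', ih2']
      ring
    · have e : (fun ω => (∑ j ∈ insert a s, T j ω)^4)
          = fun ω => ((((S ω)^4 + 4 * ((S ω)^3 * (T a ω)^1)) + 6 * ((S ω)^2 * (T a ω)^2))
              + 4 * ((S ω)^1 * (T a ω)^3)) + (T a ω)^4 := by
        funext ω; rw [Finset.sum_insert ha]; ring
      rw [e, integral_add I43 (hintT 4),
        integral_add I42 ((hint 1 3).const_mul 4),
        integral_add I41 ((hint 2 2).const_mul 6),
        integral_add (hintS 4) ((hint 3 1).const_mul 4),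
        integral_const_mul, integral_const_mul, integral_const_mul, key 3 1, key 2 2, key 1 3]
      simp only [pow_one, hTmean, mul_zero, zero_mul, add_zero, ihmean']
      rw [Finset.sum_insert ha, Finset.sum_insert ha, ih2']
      nlinarith [ih4, hTa2, hs2, sq_nonneg (∫ ω, (T a ω)^2 ∂μ)]

end Aux

set_option maxHeartbeats 1000000 in
/-- **Boundedness of the population-catalytic-prior MAP estimator in the linear
asymptotic regime** (Theorem 4(ii) of the paper).  Under Condition 1 on the
synthetic data-generating distribution with constants `B₁, q`, Condition 5
(`τ ≥ c⋆ p`), and `p > ω⋆ n` (so that `(n + τ)/τ ≤ C⋆ := 1 + 1/(c⋆ω⋆)`), there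
exist positive constants `η₀, ν` depending only on `B₁` and `q` such that every
maximizer `β̂_∞` of the population objective satisfies
`‖β̂_∞‖ ≤ C⋆ log 2/(η₀ν)`. -/
theorem stmt12 (B₁ q : ℝ) (hB : 0 < B₁) (hq0 : 0 < q) (hq1 : q < 1) :
    ∃ η₀ ν : ℝ, 0 < η₀ ∧ 0 < ν ∧
      ∀ (Ω : Type u) (_ : MeasurableSpace Ω) (μ : Measure Ω),
        IsProbabilityMeasure μ →
      ∀ (n p : ℕ) (τ cstar ostar : ℝ)
        (X : Fin n → EuclideanSpace ℝ (Fin p)) (Y : Fin n → ℝ)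
        (Xstar : Ω → EuclideanSpace ℝ (Fin p)) (Ystar : Ω → ℝ),
        (∀ i, Y i = 0 ∨ Y i = 1) →
        0 < cstar → 0 < ostar → cstar * p ≤ τ → ostar * n < p →
        Measurable Xstar → Measurable Ystar →
        Condition1 μ Xstar Ystar B₁ q →
        ∀ b : EuclideanSpace ℝ (Fin p),
          (∀ β : EuclideanSpace ℝ (Fin p),
            popObj μ τ X Y Xstar Ystar β ≤ popObj μ τ X Y Xstar Ystar b) →
          ‖b‖ ≤ (1 + 1 / (cstar * ostar)) * Real.log 2 / (η₀ * ν) := by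
  classical
  set r : ℝ := Real.sqrt (B₁^2 + 3) with hr
  have hr1 : 1 ≤ r := by
    rw [hr, show (1:ℝ) = Real.sqrt 1 by simp]
    exact Real.sqrt_le_sqrt (by nlinarith)
  have hr0 : 0 < r := lt_of_lt_of_le one_pos hr1
  refine ⟨q, 1 / (4 * r), hq0, by positivity, ?_⟩
  intro Ω mΩ μ hμ n p τ cstar ostar X Y Xstar Ystar hY hcs hos hτ hpn hXm hYm hC1 b hmax
  set ν : ℝ := 1 / (4 * r) with hν
  have hν0 : 0 < ν := by positivity
  obtain ⟨hX0, hXj, hind, hY01, hWb⟩ := hC1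
  -- basic positivity
  have hp0 : 0 < p := by
    have h1 : (0:ℝ) < (p:ℝ) := lt_of_le_of_lt (by positivity) hpn
    exact_mod_cast h1
  have hτ0 : 0 < τ := lt_of_lt_of_le (by positivity) hτ
  have hlog2 : 0 < Real.log 2 := Real.log_pos (by norm_num)
  -- the linear predictor
  set t : Ω → ℝ := fun ω => ∑ j, Xstar ω j * b j with htdef
  have hti : ∀ ω, (⟪Xstar ω, b⟫ : ℝ) = t ω := by
    intro ω; simp [htdef, PiLp.inner_apply, RCLike.inner_apply, mul_comm]
  have ht_meas : Measurable t := by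
    apply Finset.measurable_sum
    exact fun j _ => ((measurable_pi_apply j).comp ((WithLp.measurable_ofLp 2 _).comp hXm)).mul_const _
  -- a.e. bound on each coordinate and on t
  have hbd_all : ∀ j : Fin p, ∀ᵐ ω ∂μ, |Xstar ω j| ≤ max B₁ 1 := by
    intro j
    by_cases hj : (j : ℕ) = 0
    · filter_upwards [hX0 j hj] with ω hω
      rw [hω]; simp
    · filter_upwards [(hXj j hj).2.2] with ω hω
      exact le_trans hω (le_max_left _ _)
  set M : ℝ := (∑ j, |b j|) * max B₁ 1 with hM
  have hM0 : 0 ≤ M := by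
    apply mul_nonneg (Finset.sum_nonneg fun j _ => abs_nonneg _)
    exact le_trans zero_le_one (le_max_right _ _)
  have htbd : ∀ᵐ ω ∂μ, |t ω| ≤ M := by
    filter_upwards [ae_all_iff.2 hbd_all] with ω hω
    calc |t ω| ≤ ∑ j, |Xstar ω j * b j| := Finset.abs_sum_le_sum_abs _ _
      _ ≤ ∑ j, |b j| * max B₁ 1 := by
          apply Finset.sum_le_sum
          intro j _
          rw [abs_mul, mul_comm]
          exact mul_le_mul_of_nonneg_left (hω j) (abs_nonneg _)
      _ = M := by rw [hM, ← Finset.sum_mul]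
  -- integrability
  have It : Integrable t μ := integrable_of_ae_bdd ht_meas.aestronglyMeasurable htbd
  have hrho_cont : Continuous rho := by
    unfold rho
    exact (continuous_const.add Real.continuous_exp).log (fun x => (by positivity : (0:ℝ) < 1 + Real.exp x).ne')
  have hrhom : Measurable (fun ω => rho (t ω)) := hrho_cont.measurable.comp ht_meas
  have Irho : Integrable (fun ω => rho (t ω)) μ := by
    apply integrable_of_ae_bdd hrhom.aestronglyMeasurable (C := rho M)
    filter_upwards [htbd] with ω hω
    rw [abs_of_nonneg (rho_nonneg _)]
    exact rho_mono (le_trans (le_abs_self _) hω)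
  have IY : Integrable (fun ω => Ystar ω * t ω) μ := by
    apply integrable_of_ae_bdd (hYm.mul ht_meas).aestronglyMeasurable (C := 1 * M)
    filter_upwards [htbd, hY01] with ω h1 h2
    rw [Pi.mul_apply, abs_mul]
    apply mul_le_mul _ h1 (abs_nonneg _) zero_le_one
    rcases h2 with h | h <;> simp [h]
  have Iabs : Integrable (fun ω => |t ω|) μ := It.abs
  -- Step 1: objective comparison at 0
  have e0 : popObj μ τ X Y Xstar Ystar 0 = -((n : ℝ) * Real.log 2) - τ * Real.log 2 := by
    simp [popObj, rho_zero, integral_const, measure_univ]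
    ring
  set G : ℝ := ∫ ω, (Ystar ω * ⟪Xstar ω, b⟫ - rho ⟪Xstar ω, b⟫) ∂μ with hG
  have hGint : G = ∫ ω, (Ystar ω * t ω - rho (t ω)) ∂μ := by
    rw [hG]
    exact integral_congr_ae (Filter.Eventually.of_forall fun ω => by simp only [hti])
  have hsum_np : (∑ i, (Y i * ⟪X i, b⟫ - rho ⟪X i, b⟫)) ≤ 0 :=
    Finset.sum_nonpos fun i _ => obj_term_nonpos (hY i)
  have hstep1 : -((n : ℝ) * Real.log 2) - τ * Real.log 2 ≤ τ * G := by
    have h0 := hmax 0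
    rw [e0] at h0
    have : popObj μ τ X Y Xstar Ystar b = (∑ i, (Y i * ⟪X i, b⟫ - rho ⟪X i, b⟫)) + τ * G := rfl
    rw [this] at h0
    linarith
  -- Step 2: conditional expectation bound: q * ∫|t| ≤ -G
  set I : Ω → ℝ := fun ω => if Ystar ω = 1 then (1 : ℝ) else 0 with hIdef
  have hIm : Measurable I := by
    apply Measurable.ite _ measurable_const measurable_const
    exact hYm (measurableSet_singleton 1)
  have hIY : (fun ω => Ystar ω) =ᵐ[μ] I := by
    filter_upwards [hY01] with ω hω
    rcases hω with h | h <;> simp [hIdef, h]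
  set W : Ω → ℝ := μ[I | MeasurableSpace.comap Xstar inferInstance] with hWdef
  have hWint : Integrable W μ := integrable_condExp
  have ht_sm : StronglyMeasurable[MeasurableSpace.comap Xstar inferInstance] t := by
    have hXm' : @Measurable Ω _ (MeasurableSpace.comap Xstar inferInstance) _ Xstar :=
      fun s hs => ⟨s, hs, rfl⟩
    have h : @Measurable Ω ℝ (MeasurableSpace.comap Xstar inferInstance) _ t :=
      Finset.measurable_sum _ fun j _ => ((measurable_pi_apply j).comp ((WithLp.measurable_ofLp 2 _).comp hXm')).mul_const _
    exact h.stronglyMeasurable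
  have ItI : Integrable (t * I) μ := by
    apply integrable_of_ae_bdd ((ht_meas.mul hIm).aestronglyMeasurable) (C := M * 1)
    filter_upwards [htbd] with ω hω
    show |t ω * I ω| ≤ M * 1
    rw [abs_mul]
    apply mul_le_mul hω _ (abs_nonneg _) hM0
    by_cases h : Ystar ω = 1 <;> simp [hIdef, h]
  have hII : Integrable I μ := integrable_of_ae_bdd hIm.aestronglyMeasurable (C := 1)
    (by apply Filter.Eventually.of_forall; intro ω
        by_cases h : Ystar ω = 1 <;> simp [hIdef, h])
  have h_pull : ∫ ω, t ω * I ω ∂μ = ∫ ω, t ω * W ω ∂μ :=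
    condexp_pull Xstar hXm t I ht_sm ItI hII
  have ItW : Integrable (fun ω => t ω * W ω) μ := by
    apply integrable_of_ae_bdd (ht_meas.aestronglyMeasurable.mul hWint.1) (C := M * 1)
    filter_upwards [htbd, hWb] with ω h1 h2
    show |t ω * W ω| ≤ M * 1
    rw [abs_mul]
    apply mul_le_mul h1 _ (abs_nonneg _) hM0
    rw [abs_le]
    constructor <;> nlinarith [h2.1, h2.2]
  have hstep2 : q * (∫ ω, |t ω| ∂μ) ≤ -G := by
    have hYI : ∫ ω, Ystar ω * t ω ∂μ = ∫ ω, t ω * I ω ∂μ := by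
      apply integral_congr_ae
      filter_upwards [hIY] with ω hω
      rw [hω, mul_comm]
    have hGsplit : G = ∫ ω, Ystar ω * t ω ∂μ - ∫ ω, rho (t ω) ∂μ := by
      rw [hGint, integral_sub IY Irho]
    have hmono : ∫ ω, q * |t ω| ∂μ ≤ ∫ ω, (rho (t ω) - t ω * W ω) ∂μ := by
      apply integral_mono_ae (Iabs.const_mul q) (Irho.sub ItW)
      filter_upwards [hWb] with ω hω
      show q * |t ω| ≤ rho (t ω) - t ω * W ω
      rw [mul_comm (t ω) (W ω)]
      exact key_pointwise hω.1 hω.2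
    rw [integral_const_mul, integral_sub Irho ItW] at hmono
    rw [hGsplit, hYI, h_pull]
    linarith
  -- Step 3: anti-concentration
  set J := {j : Fin p // (j : ℕ) ≠ 0}
  set T : J → Ω → ℝ := fun j ω => b j.1 * Xstar ω j.1 with hTdef
  have hindT : iIndepFun T μ := by
    exact hind.comp (fun j x => b j.1 * x) (fun j => measurable_const_mul _)
  have hTmeas : ∀ j : J, Measurable (T j) :=
    fun j => ((measurable_pi_apply j.1).comp ((WithLp.measurable_ofLp 2 _).comp hXm)).const_mul _
  set D : J → ℝ := fun j => |b j.1| * B₁ with hDdef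
  have hTbd : ∀ j : J, ∀ᵐ ω ∂μ, |T j ω| ≤ D j := by
    intro j
    filter_upwards [(hXj j.1 j.2).2.2] with ω hω
    rw [hTdef, hDdef]
    dsimp only
    rw [abs_mul]
    exact mul_le_mul_of_nonneg_left hω (abs_nonneg _)
  have hTmean : ∀ j : J, ∫ ω, T j ω ∂μ = 0 := by
    intro j
    rw [hTdef]
    dsimp only
    rw [integral_const_mul, (hXj j.1 j.2).1, mul_zero]
  obtain ⟨mbd, mmean, m2eq, m4le⟩ :=
    moments T hindT hTmeas D hTbd hTmean (Finset.univ : Finset J)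
  set S : Ω → ℝ := fun ω => ∑ j : J, T j ω with hSdef
  have hSmeas : Measurable S := by
    apply Finset.measurable_sum
    exact fun j _ => hTmeas j
  set Ds : ℝ := ∑ j : J, D j with hDsdef
  have hSbd : ∀ᵐ ω ∂μ, |S ω| ≤ Ds := mbd
  have hDs0 : 0 ≤ Ds := Finset.sum_nonneg fun j _ => mul_nonneg (abs_nonneg _) hB.le
  -- per-coordinate moments
  have hX2 : ∀ j : J, ∫ ω, (Xstar ω j.1)^2 ∂μ = 1 := by
    intro j
    have hmeasj : Measurable (fun ω => Xstar ω j.1) := (measurable_pi_apply j.1).comp ((WithLp.measurable_ofLp 2 _).comp hXm)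
    have hmem : MemLp (fun ω => Xstar ω j.1) 2 μ := by
      apply MemLp.of_bound hmeasj.aestronglyMeasurable B₁
      filter_upwards [(hXj j.1 j.2).2.2] with ω hω
      simpa [Real.norm_eq_abs] using hω
    have hv := variance_eq_sub hmem
    rw [(hXj j.1 j.2).2.1, (hXj j.1 j.2).1] at hv
    have : ∫ ω, (Xstar ω j.1)^2 ∂μ = μ[(fun ω => Xstar ω j.1) ^ 2] := by
      apply integral_congr_ae; apply Filter.Eventually.of_forall; intro ω; simp
    rw [this]
    simp at hv ⊢
    linarith
  have hT2 : ∀ j : J, ∫ ω, (T j ω)^2 ∂μ = (b j.1)^2 := by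
    intro j
    rw [hTdef]
    dsimp only
    simp_rw [mul_pow]
    rw [integral_const_mul, hX2 j, mul_one]
  have hT4 : ∀ j : J, ∫ ω, (T j ω)^4 ∂μ ≤ B₁^2 * (b j.1)^4 := by
    intro j
    have hmeasj : Measurable (fun ω => Xstar ω j.1) := (measurable_pi_apply j.1).comp ((WithLp.measurable_ofLp 2 _).comp hXm)
    have hIX2 : Integrable (fun ω => (Xstar ω j.1)^2) μ := by
      apply integrable_of_ae_bdd (hmeasj.pow_const 2).aestronglyMeasurable (C := B₁^2)
      filter_upwards [(hXj j.1 j.2).2.2] with ω hω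
      rw [abs_pow]
      nlinarith [abs_nonneg (Xstar ω j.1), hω]
    have hIX4 : Integrable (fun ω => (Xstar ω j.1)^4) μ := by
      apply integrable_of_ae_bdd (hmeasj.pow_const 4).aestronglyMeasurable (C := B₁^4)
      filter_upwards [(hXj j.1 j.2).2.2] with ω hω
      rw [abs_pow]
      exact pow_le_pow_left₀ (abs_nonneg _) hω 4
    have hX4le : ∫ ω, (Xstar ω j.1)^4 ∂μ ≤ B₁^2 := by
      have h1 : ∫ ω, (Xstar ω j.1)^4 ∂μ ≤ ∫ ω, B₁^2 * (Xstar ω j.1)^2 ∂μ := by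
        apply integral_mono_ae hIX4 (hIX2.const_mul _)
        filter_upwards [(hXj j.1 j.2).2.2] with ω hω
        have hx2 : (Xstar ω j.1)^2 ≤ B₁^2 := by
          nlinarith [abs_nonneg (Xstar ω j.1), hω, sq_abs (Xstar ω j.1)]
        nlinarith [sq_nonneg (Xstar ω j.1), hx2]
      rw [integral_const_mul, hX2 j, mul_one] at h1
      exact h1
    rw [hTdef]
    dsimp only
    simp_rw [mul_pow]
    rw [integral_const_mul]
    calc (b j.1)^4 * ∫ ω, (Xstar ω j.1)^4 ∂μ ≤ (b j.1)^4 * B₁^2 :=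
          mul_le_mul_of_nonneg_left hX4le (by positivity)
      _ = B₁^2 * (b j.1)^4 := by ring
  set s2 : ℝ := ∑ j : J, (b j.1)^2 with hs2def
  have hs20 : 0 ≤ s2 := Finset.sum_nonneg fun j _ => sq_nonneg _
  have hES2 : ∫ ω, (S ω)^2 ∂μ = s2 := by
    rw [hSdef, hs2def]
    dsimp only
    rw [m2eq]
    exact Finset.sum_congr rfl fun j _ => hT2 j
  have hES4 : ∫ ω, (S ω)^4 ∂μ ≤ (B₁^2 + 3) * s2^2 := by
    have h1 : (∑ j : J, ∫ ω, (T j ω)^4 ∂μ) ≤ B₁^2 * s2^2 := by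
      calc (∑ j : J, ∫ ω, (T j ω)^4 ∂μ) ≤ ∑ j : J, B₁^2 * (b j.1)^4 :=
            Finset.sum_le_sum fun j _ => hT4 j
        _ = B₁^2 * ∑ j : J, ((b j.1)^2)^2 := by
              rw [Finset.mul_sum]
              exact Finset.sum_congr rfl fun j _ => by ring
        _ ≤ B₁^2 * s2^2 := by
            apply mul_le_mul_of_nonneg_left _ (by positivity)
            rw [hs2def]
            exact Finset.sum_sq_le_sq_sum_of_nonneg fun j _ => sq_nonneg _
    have h2 : (∑ j : J, ∫ ω, (T j ω)^2 ∂μ) = s2 := by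
      rw [hs2def]; exact Finset.sum_congr rfl fun j _ => hT2 j
    calc ∫ ω, (S ω)^4 ∂μ ≤ (∑ j : J, ∫ ω, (T j ω)^4 ∂μ)
          + 3 * (∑ j : J, ∫ ω, (T j ω)^2 ∂μ)^2 := m4le
      _ ≤ B₁^2 * s2^2 + 3 * s2^2 := by rw [h2]; linarith
      _ = (B₁^2 + 3) * s2^2 := by ring
  -- Cauchy-Schwarz chain: s2^3 ≤ ES1^2 * ES4
  set ES1 : ℝ := ∫ ω, |S ω| ∂μ with hES1def
  have hES10 : 0 ≤ ES1 := integral_nonneg fun ω => abs_nonneg _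
  have hIabsS : Integrable (fun ω => |S ω|) μ :=
    (integrable_of_ae_bdd hSmeas.aestronglyMeasurable hSbd).abs
  have hIS2 : Integrable (fun ω => (S ω)^2) μ := by
    apply integrable_of_ae_bdd (hSmeas.pow_const 2).aestronglyMeasurable (C := Ds^2)
    filter_upwards [hSbd] with ω hω
    rw [abs_pow]
    exact pow_le_pow_left₀ (abs_nonneg _) hω 2
  have hIS3 : Integrable (fun ω => |S ω|^3) μ := by
    apply integrable_of_ae_bdd (hSmeas.abs.pow_const 3).aestronglyMeasurable (C := Ds^3)
    filter_upwards [hSbd] with ω hω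
    rw [abs_pow, abs_abs]
    exact pow_le_pow_left₀ (abs_nonneg _) hω 3
  have hIS4 : Integrable (fun ω => (S ω)^4) μ := by
    apply integrable_of_ae_bdd (hSmeas.pow_const 4).aestronglyMeasurable (C := Ds^4)
    filter_upwards [hSbd] with ω hω
    rw [abs_pow]
    exact pow_le_pow_left₀ (abs_nonneg _) hω 4
  have cs1 : (∫ ω, (S ω)^2 ∂μ)^2 ≤ ES1 * ∫ ω, |S ω|^3 ∂μ := by
    have sq : ∀ ω, Real.sqrt |S ω| * Real.sqrt |S ω| = |S ω| := fun ω =>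
      Real.mul_self_sqrt (abs_nonneg _)
    have h := my_cs (μ := μ) (u := fun ω => Real.sqrt |S ω|)
      (v := fun ω => |S ω| * Real.sqrt |S ω|)
      (by simp_rw [sq]; exact hIabsS)
      (by
        have e : ∀ ω, (|S ω| * Real.sqrt |S ω|) * (|S ω| * Real.sqrt |S ω|) = |S ω|^3 := by
          intro ω
          rw [show (|S ω| * Real.sqrt |S ω|) * (|S ω| * Real.sqrt |S ω|)
            = |S ω| * |S ω| * (Real.sqrt |S ω| * Real.sqrt |S ω|) by ring, sq]
          ring
        simp_rw [e]; exact hIS3)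
      (by
        have e : ∀ ω, Real.sqrt |S ω| * (|S ω| * Real.sqrt |S ω|) = (S ω)^2 := by
          intro ω
          rw [show Real.sqrt |S ω| * (|S ω| * Real.sqrt |S ω|)
            = |S ω| * (Real.sqrt |S ω| * Real.sqrt |S ω|) by ring, sq, ← abs_mul, abs_mul_self]
          ring
        simp_rw [e]; exact hIS2)
    have e1 : ∫ ω, Real.sqrt |S ω| * Real.sqrt |S ω| ∂μ = ES1 := by
      rw [hES1def]; exact integral_congr_ae (Filter.Eventually.of_forall fun ω => sq ω)
    have e2 : ∫ ω, (|S ω| * Real.sqrt |S ω|) * (|S ω| * Real.sqrt |S ω|) ∂μ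
        = ∫ ω, |S ω|^3 ∂μ := by
      apply integral_congr_ae (Filter.Eventually.of_forall fun ω => ?_)
      rw [show (|S ω| * Real.sqrt |S ω|) * (|S ω| * Real.sqrt |S ω|)
        = |S ω| * |S ω| * (Real.sqrt |S ω| * Real.sqrt |S ω|) by ring, sq]
      ring
    have e3 : ∫ ω, Real.sqrt |S ω| * (|S ω| * Real.sqrt |S ω|) ∂μ = ∫ ω, (S ω)^2 ∂μ := by
      apply integral_congr_ae (Filter.Eventually.of_forall fun ω => ?_)
      rw [show Real.sqrt |S ω| * (|S ω| * Real.sqrt |S ω|)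
        = |S ω| * (Real.sqrt |S ω| * Real.sqrt |S ω|) by ring, sq, ← abs_mul, abs_mul_self]
      ring
    rw [e1, e2, e3] at h
    exact h
  have cs2 : (∫ ω, |S ω|^3 ∂μ)^2 ≤ (∫ ω, (S ω)^2 ∂μ) * ∫ ω, (S ω)^4 ∂μ := by
    have h := my_cs (μ := μ) (u := fun ω => |S ω|) (v := fun ω => (S ω)^2)
      (by simp_rw [← abs_mul, abs_mul_self]
          have e : ∀ ω, S ω * S ω = (S ω)^2 := fun ω => (sq (S ω)).symm
          simp_rw [e]; exact hIS2)
      (by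
        have e : ∀ ω, (S ω)^2 * (S ω)^2 = (S ω)^4 := fun ω => by ring
        simp_rw [e]; exact hIS4)
      (by
        have e : ∀ ω, |S ω| * (S ω)^2 = |S ω|^3 := by
          intro ω; rw [← sq_abs]; ring
        simp_rw [e]; exact hIS3)
    have e1 : ∫ ω, |S ω| * |S ω| ∂μ = ∫ ω, (S ω)^2 ∂μ := by
      apply integral_congr_ae (Filter.Eventually.of_forall fun ω => ?_)
      rw [← abs_mul, abs_mul_self]; ring
    have e2 : ∫ ω, (S ω)^2 * (S ω)^2 ∂μ = ∫ ω, (S ω)^4 ∂μ := by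
      apply integral_congr_ae (Filter.Eventually.of_forall fun ω => ?_)
      ring_nf
    have e3 : ∫ ω, |S ω| * (S ω)^2 ∂μ = ∫ ω, |S ω|^3 ∂μ := by
      apply integral_congr_ae (Filter.Eventually.of_forall fun ω => ?_)
      rw [← sq_abs]; ring
    rw [e1, e2, e3] at h
    exact h
  have hchain : s2^3 ≤ ES1^2 * ((B₁^2 + 3) * s2^2) := by
    have hES30 : 0 ≤ ∫ ω, |S ω|^3 ∂μ := integral_nonneg fun ω => pow_nonneg (abs_nonneg _) 3
    have hES40 : 0 ≤ ∫ ω, (S ω)^4 ∂μ := integral_nonneg fun ω => by positivity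
    rw [hES2] at cs1 cs2
    rcases le_or_gt s2 0 with h | h
    · have : s2 = 0 := le_antisymm h hs20
      rw [this]
      norm_num
    · -- s2^4 ≤ ES1^2 * ES3^2 ≤ ES1^2 * (s2 * ES4)
      have h1 : s2^4 ≤ ES1^2 * (s2 * ∫ ω, (S ω)^4 ∂μ) := by
        calc s2^4 = (s2^2)^2 := by ring
          _ ≤ (ES1 * ∫ ω, |S ω|^3 ∂μ)^2 := by
              apply pow_le_pow_left₀ (by positivity) cs1
          _ = ES1^2 * (∫ ω, |S ω|^3 ∂μ)^2 := by ring
          _ ≤ ES1^2 * (s2 * ∫ ω, (S ω)^4 ∂μ) := by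
              apply mul_le_mul_of_nonneg_left cs2 (by positivity)
      have h2 : s2^3 * s2 ≤ (ES1^2 * ∫ ω, (S ω)^4 ∂μ) * s2 := by
        calc s2^3 * s2 = s2^4 := by ring
          _ ≤ ES1^2 * (s2 * ∫ ω, (S ω)^4 ∂μ) := h1
          _ = (ES1^2 * ∫ ω, (S ω)^4 ∂μ) * s2 := by ring
      have h3 : s2^3 ≤ ES1^2 * ∫ ω, (S ω)^4 ∂μ := le_of_mul_le_mul_right h2 h
      calc s2^3 ≤ ES1^2 * ∫ ω, (S ω)^4 ∂μ := h3
        _ ≤ ES1^2 * ((B₁^2 + 3) * s2^2) := mul_le_mul_of_nonneg_left hES4 (by positivity)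
  -- σ ≤ r * ES1
  set σ : ℝ := Real.sqrt s2 with hσdef
  have hσ0 : 0 ≤ σ := Real.sqrt_nonneg _
  have hσle : σ ≤ r * ES1 := by
    rcases eq_or_lt_of_le hs20 with h | h
    · rw [hσdef, ← h]
      simp
      positivity
    · have h1 : s2 ≤ (B₁^2 + 3) * ES1^2 := by
        have h2 : s2 * s2^2 ≤ ((B₁^2 + 3) * ES1^2) * s2^2 := by nlinarith [hchain]
        exact le_of_mul_le_mul_right h2 (by positivity)
      rw [hσdef]
      calc Real.sqrt s2 ≤ Real.sqrt ((B₁^2 + 3) * ES1^2) := Real.sqrt_le_sqrt h1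
        _ = r * ES1 := by
            rw [Real.sqrt_mul (by positivity), Real.sqrt_sq hES10, hr]
  -- decomposition t = b j0 + S a.e.
  set j0 : Fin p := ⟨0, hp0⟩ with hj0def
  have hsplit : ∀ ω, t ω = Xstar ω j0 * b j0 + S ω := by
    intro ω
    rw [htdef, hSdef]
    dsimp only
    rw [← Finset.add_sum_erase Finset.univ _ (Finset.mem_univ j0)]
    congr 1
    rw [Finset.sum_subtype]
    · exact Finset.sum_congr rfl fun j _ => mul_comm _ _
    · intro x
      simp [Finset.mem_erase, Fin.ext_iff, hj0def]
  have ht_dec : ∀ᵐ ω ∂μ, t ω = b j0 + S ω := by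
    filter_upwards [hX0 j0 rfl] with ω hω
    rw [hsplit ω, hω, one_mul]
  -- ∫ t = b j0
  have hIS : Integrable S μ := integrable_of_ae_bdd hSmeas.aestronglyMeasurable hSbd
  have hmean_t : ∫ ω, t ω ∂μ = b j0 := by
    rw [integral_congr_ae ht_dec, integral_add (integrable_const _) hIS]
    have : ∫ ω, S ω ∂μ = 0 := mmean
    rw [this, integral_const, add_zero]
    simp [measure_univ]
  set A : ℝ := ∫ ω, |t ω| ∂μ with hAdef
  have hA0 : 0 ≤ A := integral_nonneg fun ω => abs_nonneg _
  have hAj0 : |b j0| ≤ A := by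
    rw [← hmean_t, hAdef]
    simpa [Real.norm_eq_abs] using norm_integral_le_integral_norm (μ := μ) t
  have hAS : ES1 ≤ A + |b j0| := by
    have hmono : ∫ ω, |S ω| ∂μ ≤ ∫ ω, (|t ω| + |b j0|) ∂μ := by
      apply integral_mono_ae hIabsS (Iabs.add (integrable_const _))
      filter_upwards [ht_dec] with ω hω
      have h1 : S ω = t ω - b j0 := by rw [hω]; ring
      rw [h1]
      exact abs_sub (t ω) (b j0)
    rw [integral_add Iabs (integrable_const _), integral_const] at hmono
    simpa [measure_univ, hES1def, hAdef] using hmono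
  -- ‖b‖ ≤ |b j0| + σ
  have hnorm : ‖b‖ ≤ |b j0| + σ := by
    have h1 : ‖b‖ = Real.sqrt (∑ j, (b j)^2) := by
      rw [EuclideanSpace.norm_eq]
      congr 1
      exact Finset.sum_congr rfl fun j _ => by rw [Real.norm_eq_abs, sq_abs]
    have h2 : (∑ j, (b j)^2) = (b j0)^2 + s2 := by
      rw [hs2def]
      rw [← Finset.add_sum_erase Finset.univ _ (Finset.mem_univ j0)]
      congr 1
      rw [Finset.sum_subtype]
      intro x
      simp [Finset.mem_erase, Fin.ext_iff, hj0def]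
    rw [h1, h2]
    have hσ2 : σ^2 = s2 := Real.sq_sqrt hs20
    have h3 : (b j0)^2 + s2 ≤ (|b j0| + σ)^2 := by
      have h4 : (|b j0| + σ)^2 = (b j0)^2 + 2 * |b j0| * σ + s2 := by
        rw [add_sq, hσ2, sq_abs]
      rw [h4]
      have := mul_nonneg (abs_nonneg (b j0)) hσ0
      linarith
    calc Real.sqrt ((b j0)^2 + s2) ≤ Real.sqrt ((|b j0| + σ)^2) := Real.sqrt_le_sqrt h3
      _ = |b j0| + σ := Real.sqrt_sq (add_nonneg (abs_nonneg _) hσ0)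
  -- A ≥ ν ‖b‖
  have hAν : ν * ‖b‖ ≤ A := by
    have h1 : σ ≤ r * (A + |b j0|) := le_trans hσle
      (mul_le_mul_of_nonneg_left hAS (le_of_lt hr0))
    have h1' : σ ≤ r * (A + A) := le_trans h1
      (mul_le_mul_of_nonneg_left (by linarith [hAj0]) hr0.le)
    have h2 : ‖b‖ ≤ |b j0| + σ := hnorm
    have h3 : ‖b‖ ≤ A + r * (A + A) := by linarith [h2, hAj0, h1']
    have hA2r : A ≤ 2 * r * A := le_mul_of_one_le_left hA0 (by linarith : (1:ℝ) ≤ 2 * r)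
    have e1 : r * (A + A) = 2 * r * A := by ring
    have h4 : ‖b‖ ≤ 4 * r * A := by linarith [h3, hA2r, e1]
    rw [hν]
    rw [div_mul_eq_mul_div, div_le_iff₀ (by positivity)]
    have e2 : A * (4 * r) = 4 * r * A := by ring
    linarith [h4, e2]
  -- Final assembly
  have hfinal : τ * (q * A) ≤ ((n : ℝ) + τ) * Real.log 2 := by
    have h1 : τ * G ≤ τ * (-(q * A)) := by
      apply mul_le_mul_of_nonneg_left _ (le_of_lt hτ0)
      rw [hAdef]
      linarith [hstep2]
    have e : τ * (-(q * A)) = -(τ * (q * A)) := by ring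
    have e2 : ((n:ℝ) + τ) * Real.log 2 = (n:ℝ) * Real.log 2 + τ * Real.log 2 := by ring
    linarith [hstep1, h1, e, e2]
  have hn_le : (n : ℝ) ≤ τ / (cstar * ostar) := by
    have h1 : cstar * (ostar * n) ≤ cstar * p := by
      apply mul_le_mul_of_nonneg_left (le_of_lt hpn) (le_of_lt hcs)
    have h2 : cstar * ostar * n ≤ τ := by
      calc cstar * ostar * (n:ℝ) = cstar * (ostar * n) := by ring
        _ ≤ cstar * p := h1
        _ ≤ τ := hτ
    rw [le_div_iff₀ (by positivity)]
    linarith [h2]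
  have hC : ((n : ℝ) + τ) ≤ (1 + 1 / (cstar * ostar)) * τ := by
    have : (1 + 1 / (cstar * ostar)) * τ = τ + τ / (cstar * ostar) := by
      field_simp
    rw [this]
    linarith [hn_le]
  have hqA : τ * (q * (ν * ‖b‖)) ≤ τ * ((1 + 1 / (cstar * ostar)) * Real.log 2) := by
    calc τ * (q * (ν * ‖b‖)) ≤ τ * (q * A) := by
          apply mul_le_mul_of_nonneg_left _ (le_of_lt hτ0)
          exact mul_le_mul_of_nonneg_left hAν (le_of_lt hq0)
      _ ≤ ((n : ℝ) + τ) * Real.log 2 := hfinal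
      _ ≤ ((1 + 1 / (cstar * ostar)) * τ) * Real.log 2 :=
          mul_le_mul_of_nonneg_right hC (le_of_lt hlog2)
      _ = τ * ((1 + 1 / (cstar * ostar)) * Real.log 2) := by ring
  have h5 : q * (ν * ‖b‖) ≤ (1 + 1 / (cstar * ostar)) * Real.log 2 := by
    exact le_of_mul_le_mul_left hqA hτ0
  rw [le_div_iff₀ (by positivity : (0:ℝ) < q * ν)]
  have e2 : ‖b‖ * (q * ν) = q * (ν * ‖b‖) := by ring
  linarith [h5, e2]
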